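/- Let F = (f_1,…,f_N) be a uniform Parseval frame for an n-dimensional complex inner product space H (so ∑_{i=1}^N |⟨x,f_i⟩|² = ‖x‖² for all x ∈ H and ‖f_i‖² = n/N for all i), and let p > 2. If G = (g_1,…,g_N) is a dual frame of F with ((1/N) ∑_{i=1}^N (‖f_i‖·‖g_i‖)^p)^{1/p} ≤ n/N, then g_i = f_i for all i. In particular, F (which is its own canonical dual) is the unique dual frame of F minimizing the 1-erasure Frobenius average error AE_F^{(1),p}(F,·), and the minimal value is n/N. -/

import Mathlib

open scoped ComplexInnerProductSpace

/-- Let `F` be a uniform Parseval frame for an `n`-dimensional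
complex inner product space `H` (so `∑ i, |⟨x, f i⟩|² = ‖x‖²` for all `x` and
`‖f i‖² = n/N` for all `i`), and let `p > 2`.  If `G` is a dual frame of `F`
whose `1`-erasure Frobenius average error satisfies
`((1/N) ∑ i, (‖f i‖·‖g i‖)^p)^(1/p) ≤ n/N`, then `g i = f i` for all `i`;
moreover the error of `F` with itself (its canonical dual) equals `n/N`,
so `F` is the unique minimizer and the minimal value is `n/N`. -/
theorem stmt_4 {H : Type*} [NormedAddCommGroup H] [InnerProductSpace ℂ H]
    [FiniteDimensional ℂ H] (n N : ℕ) (hn : Module.finrank ℂ H = n)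
    (f : Fin N → H)
    (hParseval : ∀ x : H, ∑ i, ‖⟪f i, x⟫‖ ^ 2 = ‖x‖ ^ 2)
    (huniform : ∀ i, ‖f i‖ ^ 2 = (n : ℝ) / N)
    (p : ℝ) (hp : 2 < p)
    (g : Fin N → H)
    (hdual : ∀ x : H, x = ∑ i, ⟪f i, x⟫ • g i)
    (hopt : ((1 / (N : ℝ)) * ∑ i, (‖f i‖ * ‖g i‖) ^ p) ^ (1 / p) ≤ (n : ℝ) / N) :
    (∀ i, g i = f i) ∧
      ((1 / (N : ℝ)) * ∑ i, (‖f i‖ * ‖f i‖) ^ p) ^ (1 / p) = (n : ℝ) / N := by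
  have hp0 : 0 < p := by linarith
  have hp1 : 1 < p := by linarith
  have hb0 : (0:ℝ) ≤ (n:ℝ)/N := by positivity
  -- second conjunct (holds in all cases)
  have hsecond : ((1 / (N : ℝ)) * ∑ i, (‖f i‖ * ‖f i‖) ^ p) ^ (1 / p) = (n : ℝ) / N := by
    have hterm : ∀ i : Fin N, (‖f i‖ * ‖f i‖) ^ p = ((n:ℝ)/N) ^ p := by
      intro i; rw [← sq, huniform i]
    rcases Nat.eq_zero_or_pos N with hN | hN
    · subst hN
      simp [Real.zero_rpow (inv_ne_zero hp0.ne')]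
    · have hNR : (0:ℝ) < N := by exact_mod_cast hN
      rw [Finset.sum_congr rfl fun i _ => hterm i, Finset.sum_const, Finset.card_univ,
        Fintype.card_fin, nsmul_eq_mul, one_div (N:ℝ), inv_mul_cancel_left₀ hNR.ne',
        ← Real.rpow_mul hb0, mul_one_div_cancel hp0.ne', Real.rpow_one]
  refine ⟨?_, hsecond⟩
  -- trivial case n = 0
  rcases Nat.eq_zero_or_pos n with hn0 | hn0
  · subst hn0
    have : Subsingleton H := by
      rw [← Module.finrank_zero_iff (R := ℂ)]; exact hn
    intro i; exact Subsingleton.elim _ _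
  -- now n > 0; show N > 0
  have hN : 0 < N := by
    rcases Nat.eq_zero_or_pos N with hN0 | hN0
    · exfalso
      subst hN0
      have : Nontrivial H := by
        rw [← Module.finrank_pos_iff (R := ℂ), hn]; exact hn0
      obtain ⟨x, hx⟩ := exists_ne (0 : H)
      have := hParseval x
      simp at this
      exact hx (by simpa [norm_eq_zero] using this.symm)
    · exact hN0
  have hNR : (0:ℝ) < N := by exact_mod_cast hN
  have hnR : (0:ℝ) < n := by exact_mod_cast hn0
  set b : ℝ := (n:ℝ)/N with hb
  have hbpos : 0 < b := by positivity
  set a : Fin N → ℝ := fun i => ‖f i‖ * ‖g i‖ with ha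
  have ha0 : ∀ i, 0 ≤ a i := fun i => mul_nonneg (norm_nonneg _) (norm_nonneg _)
  -- trace identity
  have hTrace : ∑ i, ⟪f i, g i⟫ = (n : ℂ) := by
    set bs := stdOrthonormalBasis ℂ H
    have key : ∀ i, ⟪f i, g i⟫ = ∑ j, ⟪f i, bs j⟫ * ⟪bs j, g i⟫ :=
      fun i => (bs.sum_inner_mul_inner (f i) (g i)).symm
    calc ∑ i, ⟪f i, g i⟫ = ∑ i, ∑ j, ⟪f i, bs j⟫ * ⟪bs j, g i⟫ :=
          Finset.sum_congr rfl fun i _ => key i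
      _ = ∑ j, ∑ i, ⟪f i, bs j⟫ * ⟪bs j, g i⟫ := Finset.sum_comm
      _ = ∑ j, ⟪bs j, ∑ i, ⟪f i, bs j⟫ • g i⟫ := by
          refine Finset.sum_congr rfl fun j _ => ?_
          rw [inner_sum]
          refine Finset.sum_congr rfl fun i _ => ?_
          rw [inner_smul_right]
      _ = ∑ j : Fin (Module.finrank ℂ H), ⟪bs j, bs j⟫ := by
          refine Finset.sum_congr rfl fun j _ => ?_
          rw [← hdual (bs j)]
      _ = (n : ℂ) := by
          have h1 : ∀ j : Fin (Module.finrank ℂ H), ⟪bs j, bs j⟫ = 1 := fun j => by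
            rw [inner_self_eq_norm_sq_to_K]
            simp [bs.orthonormal.1 j]
          rw [Finset.sum_congr rfl fun j _ => h1 j]
          simp [hn]
  have hRe : ∑ i, (⟪f i, g i⟫).re = (n : ℝ) := by
    have := congrArg Complex.re hTrace
    simpa [Complex.re_sum] using this
  have hRe_le : ∀ i, (⟪f i, g i⟫).re ≤ a i := by
    intro i
    simpa using re_inner_le_norm (𝕜 := ℂ) (f i) (g i)
  have hsum_a : (n:ℝ) ≤ ∑ i, a i := hRe ▸ Finset.sum_le_sum fun i _ => hRe_le i
  -- tangent line bound
  have htang : ∀ i, b ^ p + p * b ^ (p - 1) * (a i - b) ≤ (a i) ^ p := by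
    intro i
    have hs : -1 ≤ a i / b - 1 := by
      have : 0 ≤ a i / b := div_nonneg (ha0 i) hbpos.le
      linarith
    have h1 := one_add_mul_self_le_rpow_one_add hs hp1.le
    have h2 : b ^ p * (1 + p * (a i / b - 1)) ≤ b ^ p * (1 + (a i / b - 1)) ^ p :=
      mul_le_mul_of_nonneg_left h1 (Real.rpow_nonneg hbpos.le p)
    have h3 : b ^ p * (1 + (a i / b - 1)) ^ p = (a i) ^ p := by
      rw [← Real.mul_rpow hbpos.le (by linarith : (0:ℝ) ≤ 1 + (a i / b - 1))]
      congr 1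
      field_simp; ring
    have h4 : b ^ p * (1 + p * (a i / b - 1)) = b ^ p + p * b ^ (p - 1) * (a i - b) := by
      have hbp : b ^ p = b ^ (p - 1) * b := by
        rw [← Real.rpow_add_one hbpos.ne']; ring_nf
      rw [hbp]; field_simp
    linarith [h3 ▸ h2, h4 ▸ h2]
  have hl : ∑ i, (b ^ p + p * b ^ (p-1) * (a i - b))
      = N * b ^ p + p * b ^ (p-1) * ((∑ i, a i) - N * b) := by
    rw [Finset.sum_add_distrib, Finset.sum_const, Finset.card_univ, Fintype.card_fin,
      nsmul_eq_mul, ← Finset.mul_sum, Finset.sum_sub_distrib, Finset.sum_const,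
      Finset.card_univ, Fintype.card_fin, nsmul_eq_mul]
  -- bound on sum of a^p from hopt
  have hS : ∑ i, (a i) ^ p ≤ N * b ^ p := by
    have hL : (0:ℝ) ≤ (1 / (N : ℝ)) * ∑ i, (a i) ^ p := by
      apply mul_nonneg (by positivity)
      exact Finset.sum_nonneg fun i _ => Real.rpow_nonneg (ha0 i) p
    have h := Real.rpow_le_rpow (Real.rpow_nonneg hL (1/p)) hopt hp0.le
    rw [← Real.rpow_mul hL, one_div_mul_cancel hp0.ne', Real.rpow_one] at h
    calc ∑ i, (a i) ^ p = N * ((1 / (N : ℝ)) * ∑ i, (a i) ^ p) := by field_simp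
      _ ≤ N * b ^ p := mul_le_mul_of_nonneg_left h hNR.le
  have hsum_tang : (N:ℝ) * b ^ p + p * b ^ (p-1) * ((∑ i, a i) - N * b) ≤ ∑ i, (a i) ^ p := by
    have h := Finset.sum_le_sum (fun i (_ : i ∈ Finset.univ) => htang i)
    rw [hl] at h
    exact h
  have hNb : (N:ℝ) * b = n := by rw [hb]; field_simp
  have hcoef : 0 < p * b ^ (p-1) := by positivity
  have h5 : p * b ^ (p-1) * ((∑ i, a i) - N * b) ≤ 0 := by linarith
  have hsum_eq : ∑ i, a i = (n:ℝ) := by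
    have h6 : (∑ i, a i) ≤ N * b := by nlinarith [h5, hcoef]
    linarith [hsum_a, hNb ▸ h6]
  have hz : p * b ^ (p-1) * ((∑ i, a i) - N * b) = 0 := by
    rw [hsum_eq, hNb]; ring
  have hSeq : ∑ i, (a i) ^ p = N * b ^ p := le_antisymm hS (by linarith)
  -- termwise equality in tangent bound ⇒ a i = b
  have hab : ∀ i, a i = b := by
    intro i
    by_contra hne
    have hstrict : b ^ p + p * b ^ (p - 1) * (a i - b) < (a i) ^ p := by
      have hs : -1 ≤ a i / b - 1 := by
        have : 0 ≤ a i / b := div_nonneg (ha0 i) hbpos.le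
        linarith
      have hs' : a i / b - 1 ≠ 0 := by
        intro h
        apply hne
        have : a i / b = 1 := by linarith
        field_simp at this
        linarith
      have h1 := one_add_mul_self_lt_rpow_one_add hs hs' hp1
      have h2 : b ^ p * (1 + p * (a i / b - 1)) < b ^ p * (1 + (a i / b - 1)) ^ p :=
        (mul_lt_mul_iff_right₀ (Real.rpow_pos_of_pos hbpos p)).2 h1
      have h3 : b ^ p * (1 + (a i / b - 1)) ^ p = (a i) ^ p := by
        rw [← Real.mul_rpow hbpos.le (by linarith : (0:ℝ) ≤ 1 + (a i / b - 1))]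
        congr 1
        field_simp; ring
      have h4 : b ^ p * (1 + p * (a i / b - 1)) = b ^ p + p * b ^ (p - 1) * (a i - b) := by
        have hbp : b ^ p = b ^ (p - 1) * b := by
          rw [← Real.rpow_add_one hbpos.ne']; ring_nf
        rw [hbp]; field_simp
      linarith [h3 ▸ h2, h4 ▸ h2]
    have hsum_strict : (N:ℝ) * b ^ p + p * b ^ (p-1) * ((∑ j, a j) - N * b)
        < ∑ j, (a j) ^ p := by
      have h := Finset.sum_lt_sum (fun j (_ : j ∈ Finset.univ) => htang j)
        ⟨i, Finset.mem_univ i, hstrict⟩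
      rw [hl] at h
      exact h
    rw [hz, hSeq] at hsum_strict
    linarith
  -- termwise equality of re inner
  have hre_eq : ∀ i, (⟪f i, g i⟫).re = a i := by
    have h1 : ∑ i, (⟪f i, g i⟫).re = ∑ i, a i := by rw [hRe, hsum_eq]
    intro i
    by_contra hne
    have h2 : ∑ j, (⟪f j, g j⟫).re < ∑ j, a j :=
      Finset.sum_lt_sum (fun j _ => hRe_le j)
        ⟨i, Finset.mem_univ i, lt_of_le_of_ne (hRe_le i) hne⟩
    rw [h1] at h2
    exact lt_irrefl _ h2
  -- conclude g i = f i
  intro i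
  have hfi : ‖f i‖ ^ 2 = b := huniform i
  have hfipos : 0 < ‖f i‖ := by
    have h1 : (0:ℝ) < ‖f i‖ ^ 2 := hfi ▸ hbpos
    nlinarith [norm_nonneg (f i)]
  have hgnorm : ‖g i‖ = ‖f i‖ := by
    have h1 : ‖f i‖ * ‖g i‖ = ‖f i‖ * ‖f i‖ := by
      have h2 : a i = b := hab i
      rw [ha] at h2
      simp only at h2
      rw [h2, ← hfi]; ring
    exact mul_left_cancel₀ hfipos.ne' h1
  have hnormsub : ‖f i - g i‖ ^ 2 = 0 := by
    have h1 := norm_sub_sq (𝕜 := ℂ) (f i) (g i)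
    have hre : (⟪f i, g i⟫).re = b := by rw [hre_eq i, hab i]
    rw [hgnorm, hfi] at h1
    have hre' : RCLike.re (⟪f i, g i⟫ : ℂ) = b := hre
    rw [h1, hre']
    ring
  have hz2 : f i - g i = 0 := by
    have := pow_eq_zero_iff (n := 2) (by norm_num) |>.mp hnormsub
    exact norm_eq_zero.mp this
  exact (sub_eq_zero.mp hz2).symm
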